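/- Let P ∈ 𝒮^n satisfy the SARE AᵀP + PA + CᵀPC + Q = (PB + CᵀPD + Sᵀ)(R + DᵀPD)⁻¹(BᵀP + DᵀPC + S) with R + DᵀPD positive definite, and let K = -(R + DᵀPD)⁻¹(BᵀP + DᵀPC + S). Then for every K' ∈ ℝ^{m×n}: (A+BK')ᵀP + P(A+BK') + (C+DK')ᵀP(C+DK') + K'ᵀRK' + SᵀK' + K'ᵀS + Q = (K'-K)ᵀ(R+DᵀPD)(K'-K) ≥ 0, i.e., the Lyapunov expression at any gain K' is positive semidefinite, vanishing exactly at K' = K. -/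

import Mathlib

open Matrix

/-- If P solves the SARE and K is the Riccati gain, then for every K' the
Lyapunov expression at K' equals (K'-K)ᵀ(R+DᵀPD)(K'-K), is positive
semidefinite, and vanishes exactly at K' = K. -/
theorem stmt_14 {m n : ℕ}
    (A C : Matrix (Fin n) (Fin n) ℝ) (B D : Matrix (Fin n) (Fin m) ℝ)
    (Q P : Matrix (Fin n) (Fin n) ℝ) (R : Matrix (Fin m) (Fin m) ℝ)
    (S : Matrix (Fin m) (Fin n) ℝ)
    (hP : P.IsSymm) (hQ : Q.IsSymm) (hRD : (R + Dᵀ * P * D).PosDef)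
    (hSARE : Aᵀ * P + P * A + Cᵀ * P * C + Q
      = (P * B + Cᵀ * P * D + Sᵀ) * (R + Dᵀ * P * D)⁻¹
          * (Bᵀ * P + Dᵀ * P * C + S))
    (K : Matrix (Fin m) (Fin n) ℝ)
    (hK : K = -((R + Dᵀ * P * D)⁻¹ * (Bᵀ * P + Dᵀ * P * C + S))) :
    ∀ K' : Matrix (Fin m) (Fin n) ℝ,
      ((A + B * K')ᵀ * P + P * (A + B * K')
          + (C + D * K')ᵀ * P * (C + D * K')
          + K'ᵀ * R * K' + Sᵀ * K' + K'ᵀ * S + Q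
        = (K' - K)ᵀ * (R + Dᵀ * P * D) * (K' - K))
      ∧ ((K' - K)ᵀ * (R + Dᵀ * P * D) * (K' - K)).PosSemidef
      ∧ ((K' - K)ᵀ * (R + Dᵀ * P * D) * (K' - K) = 0 ↔ K' = K) := by
  intro K'
  set G : Matrix (Fin m) (Fin m) ℝ := R + Dᵀ * P * D with hG
  set M : Matrix (Fin m) (Fin n) ℝ := Bᵀ * P + Dᵀ * P * C + S with hM
  have hGsymm : Gᵀ = G := by
    have := hRD.isHermitian
    rwa [IsHermitian, conjTranspose_eq_transpose_of_trivial] at this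
  have hdet : IsUnit G.det := (isUnit_iff_isUnit_det G).mp hRD.isUnit
  have hGGinv : G * G⁻¹ = 1 := mul_nonsing_inv G hdet
  have hGinvG : G⁻¹ * G = 1 := nonsing_inv_mul G hdet
  have hGinvsymm : (G⁻¹)ᵀ = G⁻¹ := by
    rw [transpose_nonsing_inv, hGsymm]
  have hMT : Mᵀ = P * B + Cᵀ * P * D + Sᵀ := by
    simp [hM, transpose_add, transpose_mul, hP.eq, Matrix.mul_assoc]
  -- Main equality
  have heq : (A + B * K')ᵀ * P + P * (A + B * K')
          + (C + D * K')ᵀ * P * (C + D * K')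
          + K'ᵀ * R * K' + Sᵀ * K' + K'ᵀ * S + Q
        = (K' - K)ᵀ * G * (K' - K) := by
    have hlhs : (A + B * K')ᵀ * P + P * (A + B * K')
          + (C + D * K')ᵀ * P * (C + D * K')
          + K'ᵀ * R * K' + Sᵀ * K' + K'ᵀ * S + Q
        = (Aᵀ * P + P * A + Cᵀ * P * C + Q)
          + K'ᵀ * M + Mᵀ * K' + K'ᵀ * G * K' := by
      simp only [hM, hMT, hG, transpose_add, transpose_mul, Matrix.add_mul,
        Matrix.mul_add, hP.eq, transpose_transpose, Matrix.mul_assoc]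
      abel
    have hrhs : (K' - K)ᵀ * G * (K' - K)
        = K'ᵀ * G * K' + K'ᵀ * M + Mᵀ * K' + Mᵀ * G⁻¹ * M := by
      have h1 : G * (K' - K) = G * K' + M := by
        rw [hK, sub_neg_eq_add, Matrix.mul_add, ← Matrix.mul_assoc, hGGinv,
          Matrix.one_mul]
      have h2 : (K' - K)ᵀ = K'ᵀ + Mᵀ * G⁻¹ := by
        rw [hK, sub_neg_eq_add, transpose_add, transpose_mul, hGinvsymm]
      rw [Matrix.mul_assoc, h1, h2]
      simp only [Matrix.add_mul, Matrix.mul_add]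
      have h3 : Mᵀ * G⁻¹ * (G * K') = Mᵀ * K' := by
        rw [Matrix.mul_assoc, ← Matrix.mul_assoc G⁻¹, hGinvG, Matrix.one_mul]
      rw [h3, ← Matrix.mul_assoc]
      abel
    rw [hlhs, hrhs, hSARE, ← hMT, hM]
    abel
  refine ⟨heq, ?_, ?_⟩
  · have := hRD.posSemidef.conjTranspose_mul_mul_same (K' - K)
    rwa [conjTranspose_eq_transpose_of_trivial] at this
  · constructor
    · intro h0
      have hE : K' - K = 0 := by
        ext i j
        have hv : (K' - K) *ᵥ Pi.single j 1 = 0 := by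
          by_contra hne
          have hpos := hRD.dotProduct_mulVec_pos hne
          have : star (Pi.single j (1:ℝ)) ⬝ᵥ
              ((K' - K)ᵀ * G * (K' - K)) *ᵥ Pi.single j 1 = 0 := by
            rw [h0]; simp
          rw [← Matrix.mulVec_mulVec, ← Matrix.mulVec_mulVec,
            Matrix.dotProduct_mulVec, vecMul_transpose] at this
          have hstar : star ((K' - K) *ᵥ Pi.single j (1:ℝ))
              = (K' - K) *ᵥ star (Pi.single j (1:ℝ)) := by
            simp [star_trivial]
          rw [← hstar] at this
          rw [this] at hpos
          exact lt_irrefl _ hpos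
        have := congrFun hv i
        simpa [Matrix.mulVec_single, Matrix.sub_apply] using this
      rw [sub_eq_zero] at hE
      exact hE
    · intro h; rw [h]; simp
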